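/- Let G = (V_L ∪ V_R, E) be a bipartite α-expander for some α ∈ (0,1) with maximum degree at most Δ ≥ 1, and let λ ∈ ℝ satisfy λ ≥ (e·Δ²/0.8)^{1/α}. Consider the left hard-core polymer model on G. Then for every polymer S, ∑_{S' incompatible with S} |S'| · λ^{|S'|}/(1+λ)^{|N_G(S')|} ≤ |S| (the sum including S' = S); consequently the left hard-core polymer model satisfies the clique dynamics condition with f(S) = |S|. -/

import Mathlib

open scoped Classical

/-- `nbhd G S` is the set `N_G(S)` of all vertices adjacent to some vertex of `S`. -/
noncomputable def nbhd {V : Type*} [Fintype V] (G : SimpleGraph V) (S : Finset V) :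
    Finset V :=
  Finset.univ.filter fun v => ∃ u ∈ S, G.Adj u v

/-- `G` is bipartite with parts `VL` and `VR`. -/
def IsBipartition {V : Type*} [Fintype V] (G : SimpleGraph V) (VL VR : Finset V) : Prop :=
  Disjoint VL VR ∧ VL ∪ VR = Finset.univ ∧
    ∀ u v, G.Adj u v → (u ∈ VL ∧ v ∈ VR) ∨ (u ∈ VR ∧ v ∈ VL)

/-- `G` is a bipartite `α`-expander with parts `VL` and `VR`: every subset `S` of one
side with `|S| ≤ |V_i|/2` satisfies `|N_G(S)| ≥ (1+α)|S|`. -/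
def IsBipartiteExpander {V : Type*} [Fintype V] (G : SimpleGraph V) (VL VR : Finset V)
    (α : ℝ) : Prop :=
  IsBipartition G VL VR ∧
    (∀ S ⊆ VL, (S.card : ℝ) ≤ (VL.card : ℝ) / 2 →
      (1 + α) * (S.card : ℝ) ≤ ((nbhd G S).card : ℝ)) ∧
    (∀ S ⊆ VR, (S.card : ℝ) ≤ (VR.card : ℝ) / 2 →
      (1 + α) * (S.card : ℝ) ≤ ((nbhd G S).card : ℝ))

/-- The square `G²` of a graph: two distinct vertices are adjacent iff their distance
in `G` is at most `2`. -/
def graphSquare {V : Type*} (G : SimpleGraph V) : SimpleGraph V where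
  Adj u v := u ≠ v ∧ (G.Adj u v ∨ ∃ w, G.Adj u w ∧ G.Adj w v)
  symm := by
    constructor
    intro u v h
    refine ⟨h.1.symm, ?_⟩
    rcases h.2 with h' | ⟨w, hw1, hw2⟩
    · exact Or.inl h'.symm
    · exact Or.inr ⟨w, hw2.symm, hw1.symm⟩
  loopless := ⟨fun u h => h.1 rfl⟩

/-- A polymer of the left hard-core polymer model: a nonempty subset of `VL` with
`|S| ≤ |VL|/2` inducing a connected subgraph of `G²`. -/
def IsHCPolymer {V : Type*} [Fintype V] (G : SimpleGraph V) (VL : Finset V)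
    (S : Finset V) : Prop :=
  S.Nonempty ∧ S ⊆ VL ∧ (S.card : ℝ) ≤ (VL.card : ℝ) / 2 ∧
    ((graphSquare G).induce (↑S : Set V)).Connected

/-- The weight `w_S = λ^{|S|}/(1+λ)^{|N_G(S)|}` of a polymer `S`. -/
noncomputable def hcWeight {V : Type*} [Fintype V] (G : SimpleGraph V) (lam : ℝ)
    (S : Finset V) : ℝ :=
  lam ^ S.card / (1 + lam) ^ (nbhd G S).card

/-- Two polymers are incompatible iff some vertex of one is at distance at most `2`
in `G` from some vertex of the other. -/
def HCIncomp {V : Type*} (G : SimpleGraph V) (S S' : Finset V) : Prop :=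
  ∃ u ∈ S, ∃ v ∈ S', u = v ∨ (graphSquare G).Adj u v


open Finset
set_option linter.unusedSectionVars false
set_option maxHeartbeats 1000000

section Counting

variable {V : Type*} [Fintype V] [LinearOrder V]
variable (adj : V → V → Prop)

/-- step relation within a vertex set -/
def Step (A : Finset V) (a b : V) : Prop := adj a b ∧ a ∈ A ∧ b ∈ A

/-- reachability within a vertex set -/
def Reach (A : Finset V) : V → V → Prop := Relation.ReflTransGen (Step adj A)

/-- connectivity of a vertex set -/
def ConnOn (A : Finset V) : Prop := ∀ a ∈ A, ∀ b ∈ A, Reach adj A a b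

/-- neighbours of a vertex -/
noncomputable def nbr (u : V) : Finset V := univ.filter fun v => adj u v

/-- connected sets containing `u`, of size at most `n`, avoiding `L` -/
noncomputable def CSr (u : V) (L : Finset V) (n : ℕ) : Finset (Finset V) :=
  univ.filter fun A => u ∈ A ∧ A.card ≤ n ∧ ConnOn adj A ∧ ∀ w ∈ L, w ∉ A

lemma mem_CSr {u : V} {L : Finset V} {n : ℕ} {A : Finset V} :
    A ∈ CSr adj u L n ↔ u ∈ A ∧ A.card ≤ n ∧ ConnOn adj A ∧ ∀ w ∈ L, w ∉ A := by
  simp [CSr]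

lemma reach_mono {A B : Finset V} (hAB : A ⊆ B) {a b : V} (h : Reach adj A a b) :
    Reach adj B a b := by
  induction h with
  | refl => exact Relation.ReflTransGen.refl
  | tail _ hstep ih => exact ih.tail ⟨hstep.1, hAB hstep.2.1, hAB hstep.2.2⟩

lemma reach_symm (hsym : Symmetric adj) {A : Finset V} {a b : V} (h : Reach adj A a b) :
    Reach adj A b a :=
  by
    induction h with
    | refl => exact Relation.ReflTransGen.refl
    | tail _ hs ih => exact Relation.ReflTransGen.head ⟨hsym hs.1, hs.2.2, hs.2.1⟩ ih

lemma reach_right_mem {A : Finset V} {a b : V} (h : Reach adj A a b) : a = b ∨ b ∈ A := by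
  induction h with
  | refl => exact Or.inl rfl
  | tail _ hstep _ => exact Or.inr hstep.2.2

lemma reach_filter {B : Finset V} {w : V} : ∀ {v : V}, Reach adj B w v →
    Reach adj (B.filter fun z => Reach adj B w z) w v := by
  intro v h
  induction h with
  | refl => exact Relation.ReflTransGen.refl
  | tail hwb hstep ih =>
      refine ih.tail ⟨hstep.1, ?_, ?_⟩
      · exact mem_filter.mpr ⟨hstep.2.1, hwb⟩
      · exact mem_filter.mpr ⟨hstep.2.2, hwb.tail hstep⟩

lemma escape (hsym : Symmetric adj) {A : Finset V} {u : V} (hC : ConnOn adj A)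
    (hu : u ∈ A) : ∀ v ∈ A, v ≠ u →
    ∃ w, adj u w ∧ w ∈ A.erase u ∧ Reach adj (A.erase u) w v := by
  have main : ∀ v, Reach adj A v u → v ∈ A →
      v = u ∨ ∃ w, adj u w ∧ w ∈ A.erase u ∧ Reach adj (A.erase u) w v := by
    intro v h
    induction h using Relation.ReflTransGen.head_induction_on with
    | refl => intro _; exact Or.inl rfl
    | @head a c hstep hrest ih =>
        intro haA
        by_cases hau : a = u
        · exact Or.inl hau
        · right
          by_cases hcu : c = u
          · subst hcu
            exact ⟨a, hsym hstep.1, mem_erase.mpr ⟨hau, haA⟩, Relation.ReflTransGen.refl⟩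
          · rcases ih hstep.2.2 with h | ⟨w, hw1, hw2, hw3⟩
            · exact absurd h hcu
            · exact ⟨w, hw1, hw2, hw3.tail
                ⟨hsym hstep.1, mem_erase.mpr ⟨hcu, hstep.2.2⟩, mem_erase.mpr ⟨hau, haA⟩⟩⟩
  intro v hv hvu
  rcases main v (hC v hv u hu) hv with h | h
  · exact absurd h hvu
  · exact h

/-- the minimal neighbour of `u` inside `A \ {u}` (junk value `u` if none) -/
noncomputable def wpick (u : V) (A : Finset V) : V :=
  if h : ((nbr adj u) ∩ A.erase u).Nonempty then ((nbr adj u) ∩ A.erase u).min' h else u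

/-- the connected component of `wpick` in `A \ {u}` -/
noncomputable def comp (u : V) (A : Finset V) : Finset V :=
  (A.erase u).filter fun z => Reach adj (A.erase u) (wpick adj u A) z

lemma comp_subset {u : V} {A : Finset V} : comp adj u A ⊆ A :=
  (filter_subset _ _).trans (erase_subset _ _)

lemma decomp (hsym : Symmetric adj) (hirr : ∀ a, ¬ adj a a) {u : V} {L : Finset V}
    {n : ℕ} {A : Finset V} (hA : A ∈ CSr adj u L (n+1)) (hne : A ≠ {u}) :
    wpick adj u A ∈ nbr adj u \ L ∧
    comp adj u A ∈ CSr adj (wpick adj u A) ∅ n ∧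
    A \ comp adj u A ∈
      CSr adj u (L ∪ (nbr adj u).filter (fun v => v ≤ wpick adj u A)) n ∧
    A.card = (comp adj u A).card + (A \ comp adj u A).card := by
  obtain ⟨huA, hcard, hconn, hLA⟩ := (mem_CSr adj).mp hA
  -- a vertex different from u
  have hex : ∃ v ∈ A, v ≠ u := by
    by_contra h
    push_neg at h
    apply hne
    ext a
    constructor
    · intro ha; simpa using h a ha
    · intro ha; simpa using (mem_singleton.mp ha) ▸ huA
  obtain ⟨v, hvA, hvu⟩ := hex
  obtain ⟨w₀, hw₀adj, hw₀mem, _⟩ := escape adj hsym hconn huA v hvA hvu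
  have hne' : ((nbr adj u) ∩ A.erase u).Nonempty :=
    ⟨w₀, mem_inter.mpr ⟨mem_filter.mpr ⟨mem_univ _, hw₀adj⟩, hw₀mem⟩⟩
  set w := wpick adj u A with hwdef
  have hw : w = ((nbr adj u) ∩ A.erase u).min' hne' := by
    rw [hwdef, wpick, dif_pos hne']
  have hwmem : w ∈ (nbr adj u) ∩ A.erase u := hw ▸ min'_mem _ _
  have hwmin : ∀ v' ∈ (nbr adj u) ∩ A.erase u, w ≤ v' := by
    intro v' hv'; rw [hw]; exact min'_le _ _ hv'
  have hwnbr : w ∈ nbr adj u := (mem_inter.mp hwmem).1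
  have hwadj : adj u w := (mem_filter.mp hwnbr).2
  have hwB : w ∈ A.erase u := (mem_inter.mp hwmem).2
  have hwA : w ∈ A := mem_of_mem_erase hwB
  have hwu : w ≠ u := ne_of_mem_erase hwB
  have hwL : w ∉ L := fun h => hLA w h hwA
  set B := A.erase u with hBdef
  set T := comp adj u A with hTdef
  have hTmem : ∀ {z}, z ∈ T ↔ z ∈ B ∧ Reach adj B w z := by
    intro z; rw [hTdef, comp]; exact mem_filter
  have hTw : w ∈ T := hTmem.mpr ⟨hwB, Relation.ReflTransGen.refl⟩
  have hTB : T ⊆ B := fun z hz => (hTmem.mp hz).1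
  have hTA : T ⊆ A := comp_subset adj
  have huT : u ∉ T := fun h => (notMem_erase u A) (hTB h)
  have Tclosed : ∀ z ∈ T, ∀ y, Reach adj B z y → y ∈ T := by
    intro z hz y hr
    rcases reach_right_mem adj hr with rfl | hyB
    · exact hz
    · exact hTmem.mpr ⟨hyB, ((hTmem.mp hz).2).trans hr⟩
  -- T is connected
  have hTconn : ConnOn adj T := by
    intro a ha b hb
    have ra : Reach adj T w a := reach_filter adj (hTmem.mp ha).2
    have rb : Reach adj T w b := reach_filter adj (hTmem.mp hb).2
    exact (reach_symm adj hsym ra).trans rb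
  have hBcard : B.card = A.card - 1 := card_erase_of_mem huA
  have hTcard : T.card ≤ n := by
    have h1 := card_le_card hTB
    omega
  have fact2 : T ∈ CSr adj w ∅ n := by
    rw [mem_CSr]
    exact ⟨hTw, hTcard, hTconn, by simp⟩
  -- the rest
  set A' := A \ T with hA'def
  have huA' : u ∈ A' := mem_sdiff.mpr ⟨huA, huT⟩
  have hsplit : A.card = T.card + A'.card := by
    have h := card_sdiff_add_card_eq_card hTA
    rw [← hA'def] at h
    omega
  have hTpos : 0 < T.card := card_pos.mpr ⟨w, hTw⟩
  have hA'card : A'.card ≤ n := by omega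
  have claim : ∀ a ∈ A', Reach adj A' u a := by
    intro a ha
    obtain ⟨haA, haT⟩ := mem_sdiff.mp ha
    by_cases hau : a = u
    · subst hau; exact Relation.ReflTransGen.refl
    · obtain ⟨w₁, h1adj, h1mem, h1reach⟩ := escape adj hsym hconn huA a haA hau
      have hw₁T : w₁ ∉ T := by
        intro hw₁T
        exact haT (Tclosed w₁ hw₁T a h1reach)
      have hcompsub : (B.filter fun z => Reach adj B w₁ z) ⊆ A' := by
        intro z hz
        obtain ⟨hzB, hzr⟩ := mem_filter.mp hz
        refine mem_sdiff.mpr ⟨mem_of_mem_erase hzB, ?_⟩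
        intro hzT
        exact hw₁T (Tclosed z hzT w₁ (reach_symm adj hsym hzr))
      have hr1 : Reach adj A' w₁ a := reach_mono adj hcompsub (reach_filter adj h1reach)
      have hw₁A' : w₁ ∈ A' := hcompsub (mem_filter.mpr ⟨h1mem, Relation.ReflTransGen.refl⟩)
      exact Relation.ReflTransGen.head ⟨h1adj, huA', hw₁A'⟩ hr1
  have hA'conn : ConnOn adj A' := by
    intro a ha b hb
    exact (reach_symm adj hsym (claim a ha)).trans (claim b hb)
  have fact3 : A' ∈ CSr adj u (L ∪ (nbr adj u).filter (fun v => v ≤ w)) n := by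
    rw [mem_CSr]
    refine ⟨huA', hA'card, hA'conn, ?_⟩
    intro v hv
    rcases mem_union.mp hv with hvL | hvle
    · intro hvA'
      exact hLA v hvL (mem_sdiff.mp hvA').1
    · obtain ⟨hvnbr, hvle⟩ := mem_filter.mp hvle
      intro hvA'
      obtain ⟨hvA, hvT⟩ := mem_sdiff.mp hvA'
      have hvu : v ≠ u := by
        intro h; subst h; exact hirr v (mem_filter.mp hvnbr).2
      have : w ≤ v := hwmin v (mem_inter.mpr ⟨hvnbr, mem_erase.mpr ⟨hvu, hvA⟩⟩)
      have hvw : v = w := le_antisymm hvle this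
      exact hvT (hvw ▸ hTw)
  exact ⟨mem_sdiff.mpr ⟨hwnbr, hwL⟩, fact2, fact3, hsplit⟩

end Counting
section Counting2

variable {V : Type*} [Fintype V] [LinearOrder V]
variable (adj : V → V → Prop)

/-- summing a nonneg function of the number-of-larger-elements over a finset is at most
the sum over `range card` -/
lemma sum_rank_le {N : Finset V} {φ : ℕ → ℝ} (hφ : ∀ j, 0 ≤ φ j) :
    ∑ w ∈ N, φ ((N.filter fun v => w < v).card) ≤ ∑ j ∈ range N.card, φ j := by
  classical
  set c : V → ℕ := fun w => (N.filter fun v => w < v).card with hc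
  have hmono : ∀ w₁ ∈ N, ∀ w₂ ∈ N, w₁ < w₂ → c w₂ < c w₁ := by
    intro w₁ h₁ w₂ h₂ hlt
    apply card_lt_card
    constructor
    · intro v hv
      obtain ⟨hvN, hvgt⟩ := mem_filter.mp hv
      exact mem_filter.mpr ⟨hvN, hlt.trans hvgt⟩
    · intro hsub
      have : w₂ ∈ N.filter fun v => w₂ < v := hsub (mem_filter.mpr ⟨h₂, hlt⟩)
      exact absurd ((mem_filter.mp this).2) (lt_irrefl w₂)
  have hinj : ∀ w₁ ∈ N, ∀ w₂ ∈ N, c w₁ = c w₂ → w₁ = w₂ := by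
    intro w₁ h₁ w₂ h₂ he
    rcases lt_trichotomy w₁ w₂ with h | h | h
    · exact absurd he (by have := hmono w₁ h₁ w₂ h₂ h; omega)
    · exact h
    · exact absurd he (by have := hmono w₂ h₂ w₁ h₁ h; omega)
  have himg : ∑ w ∈ N, φ (c w) = ∑ j ∈ N.image c, φ j := (sum_image hinj).symm
  rw [himg]
  apply sum_le_sum_of_subset_of_nonneg
  · intro j hj
    obtain ⟨w, hw, rfl⟩ := mem_image.mp hj
    have hsub : (N.filter fun v => w < v) ⊆ N.erase w := by
      intro v hv
      obtain ⟨hvN, hvgt⟩ := mem_filter.mp hv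
      exact mem_erase.mpr ⟨ne_of_gt hvgt, hvN⟩
    have h1 : c w ≤ (N.erase w).card := card_le_card hsub
    have h2 : (N.erase w).card = N.card - 1 := card_erase_of_mem hw
    have h3 : 0 < N.card := card_pos.mpr ⟨w, hw⟩
    exact mem_range.mpr (by omega)
  · intro j _ _; exact hφ j

/-- telescoping identity `∑_{j<m} (z^j + (z-1) j z^(j-1)) = m z^(m-1)` -/
lemma tele_sum (z : ℝ) : ∀ m : ℕ,
    ∑ j ∈ range m, (z ^ j + (z - 1) * j * z ^ (j - 1)) = m * z ^ (m - 1) := by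
  intro m
  induction m with
  | zero => simp
  | succ k ih =>
      rw [sum_range_succ, ih]
      cases k with
      | zero => norm_num
      | succ l =>
          have h1 : l + 1 - 1 = l := by omega
          have h2 : l + 1 + 1 - 1 = l + 1 := by omega
          rw [h1, h2]
          have h3 : z ^ (l + 1) = z ^ l * z := pow_succ z l
          push_cast
          rw [h3]
          ring

variable (x Cs Gs : ℝ) (D : ℕ)

lemma keyA (hsym : Symmetric adj) (hirr : ∀ a, ¬ adj a a)
    (hx : 0 ≤ x) (hCs : 0 ≤ Cs)
    (hdeg : ∀ u : V, (nbr adj u).card ≤ D)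
    (hA : x * (1 + Cs) ^ D ≤ Cs) :
    ∀ n : ℕ, ∀ u : V, ∀ L : Finset V,
      (∑ A ∈ CSr adj u L n, x ^ A.card) ≤ x * (1 + Cs) ^ ((nbr adj u \ L).card) := by
  intro n
  induction n with
  | zero =>
      intro u L
      have hempty : CSr adj u L 0 = ∅ := by
        ext A
        simp only [mem_CSr, notMem_empty, iff_false]
        rintro ⟨huA, hcard, -, -⟩
        have : 0 < A.card := card_pos.mpr ⟨u, huA⟩
        omega
      rw [hempty]
      simp only [sum_empty]
      positivity
  | succ n IH =>
      intro u L
      set N := nbr adj u \ L with hN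
      set m := N.card with hm
      set z := 1 + Cs with hz
      have hz1 : (1:ℝ) ≤ z := by rw [hz]; linarith
      have hz0 : (0:ℝ) ≤ z := by linarith
      set E := (CSr adj u L (n+1)).erase {u} with hE
      -- reduce to sum over E
      have hsub : CSr adj u L (n+1) ⊆ insert {u} E := by
        intro A hA'
        by_cases h : A = {u}
        · subst h; exact mem_insert_self _ _
        · exact mem_insert_of_mem (mem_erase.mpr ⟨h, hA'⟩)
      have step1 : (∑ A ∈ CSr adj u L (n+1), x ^ A.card) ≤ x + ∑ A ∈ E, x ^ A.card := by
        calc (∑ A ∈ CSr adj u L (n+1), x ^ A.card)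
            ≤ ∑ A ∈ insert {u} E, x ^ A.card := by
              apply sum_le_sum_of_subset_of_nonneg hsub
              intro A _ _; positivity
          _ = x ^ (({u} : Finset V).card) + ∑ A ∈ E, x ^ A.card := by
              rw [sum_insert (notMem_erase _ _)]
          _ = x + ∑ A ∈ E, x ^ A.card := by rw [card_singleton, pow_one]
      -- decomposition map
      set Φ : Finset V → Σ _ : V, Finset V × Finset V :=
        fun A => ⟨wpick adj u A, (comp adj u A, A \ comp adj u A)⟩ with hΦ
      set g : (Σ _ : V, Finset V × Finset V) → ℝ :=
        fun p => x ^ p.2.1.card * x ^ p.2.2.card with hg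
      set P : Finset (Σ _ : V, Finset V × Finset V) :=
        N.sigma (fun w => (CSr adj w ∅ n) ×ˢ
          (CSr adj u (L ∪ (nbr adj u).filter (fun v => v ≤ w)) n)) with hP
      have hdecomp : ∀ A ∈ E, _ := fun A hA' =>
        decomp adj hsym hirr ((mem_erase.mp hA').2) ((mem_erase.mp hA').1)
      have hinj : ∀ A₁ ∈ E, ∀ A₂ ∈ E, Φ A₁ = Φ A₂ → A₁ = A₂ := by
        intro A₁ h₁ A₂ h₂ heq
        have hpair : (comp adj u A₁, A₁ \ comp adj u A₁)
            = (comp adj u A₂, A₂ \ comp adj u A₂) := by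
          have := (Sigma.mk.inj_iff.mp heq).2
          exact eq_of_heq this
        have hT : comp adj u A₁ = comp adj u A₂ := (Prod.mk.injEq _ _ _ _).mp hpair |>.1
        have hR : A₁ \ comp adj u A₁ = A₂ \ comp adj u A₂ := (Prod.mk.injEq _ _ _ _).mp hpair |>.2
        have e₁ : comp adj u A₁ ∪ (A₁ \ comp adj u A₁) = A₁ :=
          union_sdiff_of_subset (comp_subset adj)
        have e₂ : comp adj u A₂ ∪ (A₂ \ comp adj u A₂) = A₂ :=
          union_sdiff_of_subset (comp_subset adj)
        rw [← e₁, ← e₂, hR, hT]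
      have step2 : ∑ A ∈ E, x ^ A.card = ∑ A ∈ E, g (Φ A) := by
        apply sum_congr rfl
        intro A hA'
        obtain ⟨-, -, -, hsplit⟩ := hdecomp A hA'
        rw [hg, hΦ]
        simp only []
        rw [hsplit, pow_add]
      have step3 : ∑ A ∈ E, g (Φ A) = ∑ p ∈ E.image Φ, g p := (sum_image hinj).symm
      have himgsub : E.image Φ ⊆ P := by
        intro p hp
        obtain ⟨A, hA', rfl⟩ := mem_image.mp hp
        obtain ⟨f1, f2, f3, -⟩ := hdecomp A hA'
        rw [hP]
        rw [mem_sigma]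
        exact ⟨f1, mem_product.mpr ⟨f2, f3⟩⟩
      have step4 : ∑ p ∈ E.image Φ, g p ≤ ∑ p ∈ P, g p := by
        apply sum_le_sum_of_subset_of_nonneg himgsub
        intro p _ _
        rw [hg]; positivity
      have step5 : ∑ p ∈ P, g p
          = ∑ w ∈ N, (∑ T ∈ CSr adj w ∅ n, x ^ T.card) *
              (∑ R ∈ CSr adj u (L ∪ (nbr adj u).filter (fun v => v ≤ w)) n, x ^ R.card) := by
        rw [hP, sum_sigma]
        apply sum_congr rfl
        intro w _
        rw [sum_product]
        rw [sum_mul_sum]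
      have hexpand : ∀ w ∈ N,
          nbr adj u \ (L ∪ (nbr adj u).filter (fun v => v ≤ w)) = N.filter fun v => w < v := by
        intro w _
        ext v
        simp only [hN, mem_sdiff, mem_union, mem_filter, not_or, not_and, not_le]
        constructor
        · rintro ⟨hv, hvL, hvle⟩
          exact ⟨⟨hv, hvL⟩, hvle hv⟩
        · rintro ⟨⟨hv, hvL⟩, hlt⟩
          exact ⟨hv, hvL, fun _ => hlt⟩
      have step6 : ∑ w ∈ N, (∑ T ∈ CSr adj w ∅ n, x ^ T.card) *
              (∑ R ∈ CSr adj u (L ∪ (nbr adj u).filter (fun v => v ≤ w)) n, x ^ R.card)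
          ≤ ∑ w ∈ N, Cs * (x * z ^ ((N.filter fun v => w < v).card)) := by
        apply sum_le_sum
        intro w hw
        have hTbound : (∑ T ∈ CSr adj w ∅ n, x ^ T.card) ≤ Cs := by
          calc (∑ T ∈ CSr adj w ∅ n, x ^ T.card)
              ≤ x * z ^ ((nbr adj w \ ∅).card) := IH w ∅
            _ ≤ x * z ^ D := by
                apply mul_le_mul_of_nonneg_left _ hx
                apply pow_le_pow_right₀ hz1
                rw [sdiff_empty]
                exact hdeg w
            _ ≤ Cs := hA
        have hRbound : (∑ R ∈ CSr adj u (L ∪ (nbr adj u).filter (fun v => v ≤ w)) n, x ^ R.card)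
            ≤ x * z ^ ((N.filter fun v => w < v).card) := by
          have := IH u (L ∪ (nbr adj u).filter (fun v => v ≤ w))
          rwa [hexpand w hw] at this
        have hTnn : (0:ℝ) ≤ ∑ T ∈ CSr adj w ∅ n, x ^ T.card := by
          apply sum_nonneg; intro T _; positivity
        have hRnn : (0:ℝ) ≤ ∑ R ∈ CSr adj u (L ∪ (nbr adj u).filter (fun v => v ≤ w)) n, x ^ R.card := by
          apply sum_nonneg; intro R _; positivity
        exact mul_le_mul hTbound hRbound hRnn hCs
      have step7 : ∑ w ∈ N, Cs * (x * z ^ ((N.filter fun v => w < v).card))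
          ≤ ∑ j ∈ range m, Cs * (x * z ^ j) := by
        rw [hm]
        exact sum_rank_le (N := N) (φ := fun j => Cs * (x * z ^ j)) (fun j => by positivity)
      have hgeom : (∑ i ∈ range m, z ^ i) * Cs = z ^ m - 1 := by
        have := geom_sum_mul z m
        rw [hz] at this ⊢
        simpa using this
      have step8 : x + ∑ j ∈ range m, Cs * (x * z ^ j) = x * z ^ m := by
        have h1 : ∑ j ∈ range m, Cs * (x * z ^ j) = x * ((∑ i ∈ range m, z ^ i) * Cs) := by
          rw [sum_mul, mul_sum]
          apply sum_congr rfl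
          intro j _; ring
        rw [h1, hgeom]; ring
      calc (∑ A ∈ CSr adj u L (n+1), x ^ A.card)
          ≤ x + ∑ A ∈ E, x ^ A.card := step1
        _ = x + ∑ p ∈ E.image Φ, g p := by rw [step2, step3]
        _ ≤ x + ∑ p ∈ P, g p := by linarith [step4]
        _ = x + ∑ w ∈ N, (∑ T ∈ CSr adj w ∅ n, x ^ T.card) *
              (∑ R ∈ CSr adj u (L ∪ (nbr adj u).filter (fun v => v ≤ w)) n, x ^ R.card) := by
            rw [step5]
        _ ≤ x + ∑ j ∈ range m, Cs * (x * z ^ j) := by linarith [step6.trans step7]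
        _ = x * z ^ m := step8

end Counting2

section Counting3

variable {V : Type*} [Fintype V] [LinearOrder V]
variable (adj : V → V → Prop)
variable (x Cs Gs : ℝ) (D : ℕ)

lemma keyB (hsym : Symmetric adj) (hirr : ∀ a, ¬ adj a a)
    (hx : 0 ≤ x) (hCs : 0 ≤ Cs) (hGs : 0 ≤ Gs)
    (hdeg : ∀ u : V, (nbr adj u).card ≤ D)
    (hA : x * (1 + Cs) ^ D ≤ Cs)
    (hB : x * (1 + Cs) ^ D + Gs * x * (D : ℝ) * (1 + Cs) ^ (D - 1) ≤ Gs) :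
    ∀ n : ℕ, ∀ u : V, ∀ L : Finset V,
      (∑ A ∈ CSr adj u L n, (A.card : ℝ) * x ^ A.card) ≤
        x * (1 + Cs) ^ ((nbr adj u \ L).card) +
          Gs * x * ((nbr adj u \ L).card : ℝ) * (1 + Cs) ^ ((nbr adj u \ L).card - 1) := by
  intro n
  induction n with
  | zero =>
      intro u L
      have hempty : CSr adj u L 0 = ∅ := by
        ext A
        simp only [mem_CSr, notMem_empty, iff_false]
        rintro ⟨huA, hcard, -, -⟩
        have : 0 < A.card := card_pos.mpr ⟨u, huA⟩
        omega
      rw [hempty]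
      simp only [sum_empty]
      positivity
  | succ n IH =>
      intro u L
      set N := nbr adj u \ L with hN
      set m := N.card with hm
      set z := 1 + Cs with hz
      have hz1 : (1:ℝ) ≤ z := by rw [hz]; linarith
      have hz0 : (0:ℝ) ≤ z := by linarith
      have hzc : Cs = z - 1 := by rw [hz]; ring
      set E := (CSr adj u L (n+1)).erase {u} with hE
      have hsub : CSr adj u L (n+1) ⊆ insert {u} E := by
        intro A hA'
        by_cases h : A = {u}
        · subst h; exact mem_insert_self _ _
        · exact mem_insert_of_mem (mem_erase.mpr ⟨h, hA'⟩)
      have step1 : (∑ A ∈ CSr adj u L (n+1), (A.card : ℝ) * x ^ A.card)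
          ≤ x + ∑ A ∈ E, (A.card : ℝ) * x ^ A.card := by
        calc (∑ A ∈ CSr adj u L (n+1), (A.card : ℝ) * x ^ A.card)
            ≤ ∑ A ∈ insert {u} E, (A.card : ℝ) * x ^ A.card := by
              apply sum_le_sum_of_subset_of_nonneg hsub
              intro A _ _; exact mul_nonneg (Nat.cast_nonneg _) (pow_nonneg hx _)
          _ = (({u} : Finset V).card : ℝ) * x ^ (({u} : Finset V).card)
                + ∑ A ∈ E, (A.card : ℝ) * x ^ A.card := by
              rw [sum_insert (notMem_erase _ _)]
          _ = x + ∑ A ∈ E, (A.card : ℝ) * x ^ A.card := by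
              rw [card_singleton, pow_one]; norm_num
      set Φ : Finset V → Σ _ : V, Finset V × Finset V :=
        fun A => ⟨wpick adj u A, (comp adj u A, A \ comp adj u A)⟩ with hΦ
      set g : (Σ _ : V, Finset V × Finset V) → ℝ :=
        fun p => ((p.2.1.card : ℝ) * x ^ p.2.1.card) * x ^ p.2.2.card
          + x ^ p.2.1.card * ((p.2.2.card : ℝ) * x ^ p.2.2.card) with hg
      set P : Finset (Σ _ : V, Finset V × Finset V) :=
        N.sigma (fun w => (CSr adj w ∅ n) ×ˢ
          (CSr adj u (L ∪ (nbr adj u).filter (fun v => v ≤ w)) n)) with hP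
      have hdecomp : ∀ A ∈ E, _ := fun A hA' =>
        decomp adj hsym hirr ((mem_erase.mp hA').2) ((mem_erase.mp hA').1)
      have hinj : ∀ A₁ ∈ E, ∀ A₂ ∈ E, Φ A₁ = Φ A₂ → A₁ = A₂ := by
        intro A₁ h₁ A₂ h₂ heq
        have hpair : (comp adj u A₁, A₁ \ comp adj u A₁)
            = (comp adj u A₂, A₂ \ comp adj u A₂) := by
          have := (Sigma.mk.inj_iff.mp heq).2
          exact eq_of_heq this
        have hT : comp adj u A₁ = comp adj u A₂ := (Prod.mk.injEq _ _ _ _).mp hpair |>.1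
        have hR : A₁ \ comp adj u A₁ = A₂ \ comp adj u A₂ := (Prod.mk.injEq _ _ _ _).mp hpair |>.2
        have e₁ : comp adj u A₁ ∪ (A₁ \ comp adj u A₁) = A₁ :=
          union_sdiff_of_subset (comp_subset adj)
        have e₂ : comp adj u A₂ ∪ (A₂ \ comp adj u A₂) = A₂ :=
          union_sdiff_of_subset (comp_subset adj)
        rw [← e₁, ← e₂, hR, hT]
      have step2 : ∑ A ∈ E, (A.card : ℝ) * x ^ A.card = ∑ A ∈ E, g (Φ A) := by
        apply sum_congr rfl
        intro A hA'
        obtain ⟨-, -, -, hsplit⟩ := hdecomp A hA'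
        rw [hg, hΦ]
        simp only []
        rw [hsplit, pow_add]
        push_cast
        ring
      have step3 : ∑ A ∈ E, g (Φ A) = ∑ p ∈ E.image Φ, g p := (sum_image hinj).symm
      have himgsub : E.image Φ ⊆ P := by
        intro p hp
        obtain ⟨A, hA', rfl⟩ := mem_image.mp hp
        obtain ⟨f1, f2, f3, -⟩ := hdecomp A hA'
        rw [hP, mem_sigma]
        exact ⟨f1, mem_product.mpr ⟨f2, f3⟩⟩
      have step4 : ∑ p ∈ E.image Φ, g p ≤ ∑ p ∈ P, g p := by
        apply sum_le_sum_of_subset_of_nonneg himgsub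
        intro p _ _
        rw [hg]; exact add_nonneg (mul_nonneg (mul_nonneg (Nat.cast_nonneg _) (pow_nonneg hx _)) (pow_nonneg hx _)) (mul_nonneg (pow_nonneg hx _) (mul_nonneg (Nat.cast_nonneg _) (pow_nonneg hx _)))
      have step5 : ∑ p ∈ P, g p
          = ∑ w ∈ N,
              ((∑ T ∈ CSr adj w ∅ n, (T.card : ℝ) * x ^ T.card) *
                (∑ R ∈ CSr adj u (L ∪ (nbr adj u).filter (fun v => v ≤ w)) n, x ^ R.card)
              + (∑ T ∈ CSr adj w ∅ n, x ^ T.card) *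
                (∑ R ∈ CSr adj u (L ∪ (nbr adj u).filter (fun v => v ≤ w)) n,
                  (R.card : ℝ) * x ^ R.card)) := by
        rw [hP, sum_sigma]
        apply sum_congr rfl
        intro w _
        rw [sum_product]
        rw [sum_mul_sum, sum_mul_sum]
        rw [← sum_add_distrib]
        apply sum_congr rfl
        intro T _
        rw [← sum_add_distrib]
      have hexpand : ∀ w ∈ N,
          nbr adj u \ (L ∪ (nbr adj u).filter (fun v => v ≤ w)) = N.filter fun v => w < v := by
        intro w _
        ext v
        simp only [hN, mem_sdiff, mem_union, mem_filter, not_or, not_and, not_le]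
        constructor
        · rintro ⟨hv, hvL, hvle⟩
          exact ⟨⟨hv, hvL⟩, hvle hv⟩
        · rintro ⟨⟨hv, hvL⟩, hlt⟩
          exact ⟨hv, hvL, fun _ => hlt⟩
      set φ : ℕ → ℝ := fun j => Gs * (x * z ^ j) + Cs * (x * z ^ j + Gs * x * (j : ℝ) * z ^ (j - 1))
        with hφ
      have hφnn : ∀ j, 0 ≤ φ j := by intro j; rw [hφ]; positivity
      have step6 : ∑ w ∈ N,
              ((∑ T ∈ CSr adj w ∅ n, (T.card : ℝ) * x ^ T.card) *
                (∑ R ∈ CSr adj u (L ∪ (nbr adj u).filter (fun v => v ≤ w)) n, x ^ R.card)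
              + (∑ T ∈ CSr adj w ∅ n, x ^ T.card) *
                (∑ R ∈ CSr adj u (L ∪ (nbr adj u).filter (fun v => v ≤ w)) n,
                  (R.card : ℝ) * x ^ R.card))
          ≤ ∑ w ∈ N, φ ((N.filter fun v => w < v).card) := by
        apply sum_le_sum
        intro w hw
        have hTA : (∑ T ∈ CSr adj w ∅ n, x ^ T.card) ≤ Cs := by
          calc (∑ T ∈ CSr adj w ∅ n, x ^ T.card)
              ≤ x * z ^ ((nbr adj w \ ∅).card) := keyA adj x Cs D hsym hirr hx hCs hdeg hA n w ∅
            _ ≤ x * z ^ D := by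
                apply mul_le_mul_of_nonneg_left _ hx
                apply pow_le_pow_right₀ hz1
                rw [sdiff_empty]
                exact hdeg w
            _ ≤ Cs := hA
        have hTB : (∑ T ∈ CSr adj w ∅ n, (T.card : ℝ) * x ^ T.card) ≤ Gs := by
          calc (∑ T ∈ CSr adj w ∅ n, (T.card : ℝ) * x ^ T.card)
              ≤ x * z ^ ((nbr adj w \ ∅).card)
                + Gs * x * (((nbr adj w \ ∅).card : ℝ)) * z ^ ((nbr adj w \ ∅).card - 1) :=
                IH w ∅
            _ ≤ x * z ^ D + Gs * x * (D : ℝ) * z ^ (D - 1) := by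
                have hdw : (nbr adj w \ ∅).card ≤ D := by rw [sdiff_empty]; exact hdeg w
                have h1 : x * z ^ ((nbr adj w \ ∅).card) ≤ x * z ^ D :=
                  mul_le_mul_of_nonneg_left (pow_le_pow_right₀ hz1 hdw) hx
                have h2 : Gs * x * (((nbr adj w \ ∅).card : ℝ)) * z ^ ((nbr adj w \ ∅).card - 1)
                    ≤ Gs * x * (D : ℝ) * z ^ (D - 1) := by
                  apply mul_le_mul
                  · apply mul_le_mul_of_nonneg_left _ (by positivity)
                    exact_mod_cast hdw
                  · exact pow_le_pow_right₀ hz1 (Nat.sub_le_sub_right hdw 1)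
                  · positivity
                  · positivity
                linarith
            _ ≤ Gs := hB
        have hRA : (∑ R ∈ CSr adj u (L ∪ (nbr adj u).filter (fun v => v ≤ w)) n, x ^ R.card)
            ≤ x * z ^ ((N.filter fun v => w < v).card) := by
          have := keyA adj x Cs D hsym hirr hx hCs hdeg hA n u
            (L ∪ (nbr adj u).filter (fun v => v ≤ w))
          rwa [hexpand w hw] at this
        have hRB : (∑ R ∈ CSr adj u (L ∪ (nbr adj u).filter (fun v => v ≤ w)) n,
              (R.card : ℝ) * x ^ R.card)
            ≤ x * z ^ ((N.filter fun v => w < v).card)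
              + Gs * x * (((N.filter fun v => w < v).card : ℝ))
                * z ^ ((N.filter fun v => w < v).card - 1) := by
          have := IH u (L ∪ (nbr adj u).filter (fun v => v ≤ w))
          rwa [hexpand w hw] at this
        have hTAnn : (0:ℝ) ≤ ∑ T ∈ CSr adj w ∅ n, x ^ T.card := by
          apply sum_nonneg; intro T _; positivity
        have hTBnn : (0:ℝ) ≤ ∑ T ∈ CSr adj w ∅ n, (T.card : ℝ) * x ^ T.card := by
          apply sum_nonneg; intro T _; exact mul_nonneg (Nat.cast_nonneg _) (pow_nonneg hx _)
        have hRAnn : (0:ℝ) ≤ ∑ R ∈ CSr adj u (L ∪ (nbr adj u).filter (fun v => v ≤ w)) n,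
            x ^ R.card := by
          apply sum_nonneg; intro R _; positivity
        have hRBnn : (0:ℝ) ≤ ∑ R ∈ CSr adj u (L ∪ (nbr adj u).filter (fun v => v ≤ w)) n,
            (R.card : ℝ) * x ^ R.card := by
          apply sum_nonneg; intro R _; exact mul_nonneg (Nat.cast_nonneg _) (pow_nonneg hx _)
        have t1 := mul_le_mul hTB hRA hRAnn hGs
        have t2 := mul_le_mul hTA hRB hRBnn hCs
        rw [hφ]
        simp only []
        have : Gs * (x * z ^ ((N.filter fun v => w < v).card))
            + Cs * (x * z ^ ((N.filter fun v => w < v).card)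
              + Gs * x * (((N.filter fun v => w < v).card : ℝ))
                * z ^ ((N.filter fun v => w < v).card - 1))
            = Gs * (x * z ^ ((N.filter fun v => w < v).card))
            + Cs * (x * z ^ ((N.filter fun v => w < v).card)
              + Gs * x * (((N.filter fun v => w < v).card : ℝ))
                * z ^ ((N.filter fun v => w < v).card - 1)) := rfl
        linarith
      have step7 : ∑ w ∈ N, φ ((N.filter fun v => w < v).card) ≤ ∑ j ∈ range m, φ j := by
        rw [hm]
        exact sum_rank_le hφnn
      have hgeom : (∑ i ∈ range m, z ^ i) * Cs = z ^ m - 1 := by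
        have := geom_sum_mul z m
        rw [hz] at this ⊢
        simpa using this
      have htele := tele_sum z m
      have step8 : x + ∑ j ∈ range m, φ j = x * z ^ m + Gs * x * (m : ℝ) * z ^ (m - 1) := by
        have h1 : ∑ j ∈ range m, φ j
            = x * ((∑ i ∈ range m, z ^ i) * Cs)
              + Gs * x * (∑ j ∈ range m, (z ^ j + (z - 1) * (j:ℝ) * z ^ (j - 1))) := by
          rw [hφ, sum_mul, mul_sum, mul_sum]
          rw [← sum_add_distrib]
          apply sum_congr rfl
          intro j _
          rw [hzc]
          ring
        rw [h1, hgeom, htele]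
        ring
      calc (∑ A ∈ CSr adj u L (n+1), (A.card : ℝ) * x ^ A.card)
          ≤ x + ∑ A ∈ E, (A.card : ℝ) * x ^ A.card := step1
        _ = x + ∑ p ∈ E.image Φ, g p := by rw [step2, step3]
        _ ≤ x + ∑ p ∈ P, g p := by linarith [step4]
        _ ≤ x + ∑ j ∈ range m, φ j := by
            rw [step5]
            linarith [step6.trans step7]
        _ = x * z ^ m + Gs * x * (m : ℝ) * z ^ (m - 1) := step8

lemma keyB_final (hsym : Symmetric adj) (hirr : ∀ a, ¬ adj a a)
    (hx : 0 ≤ x) (hCs : 0 ≤ Cs) (hGs : 0 ≤ Gs)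
    (hdeg : ∀ u : V, (nbr adj u).card ≤ D)
    (hA : x * (1 + Cs) ^ D ≤ Cs)
    (hB : x * (1 + Cs) ^ D + Gs * x * (D : ℝ) * (1 + Cs) ^ (D - 1) ≤ Gs)
    (n : ℕ) (u : V) :
    (∑ A ∈ CSr adj u ∅ n, (A.card : ℝ) * x ^ A.card) ≤ Gs := by
  have hz1 : (1:ℝ) ≤ 1 + Cs := by linarith
  have hdw : (nbr adj u \ ∅).card ≤ D := by rw [sdiff_empty]; exact hdeg u
  calc (∑ A ∈ CSr adj u ∅ n, (A.card : ℝ) * x ^ A.card)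
      ≤ x * (1+Cs) ^ ((nbr adj u \ ∅).card)
        + Gs * x * (((nbr adj u \ ∅).card : ℝ)) * (1+Cs) ^ ((nbr adj u \ ∅).card - 1) :=
        keyB adj x Cs Gs D hsym hirr hx hCs hGs hdeg hA hB n u ∅
    _ ≤ x * (1+Cs) ^ D + Gs * x * (D : ℝ) * (1+Cs) ^ (D - 1) := by
        have h1 : x * (1+Cs) ^ ((nbr adj u \ ∅).card) ≤ x * (1+Cs) ^ D :=
          mul_le_mul_of_nonneg_left (pow_le_pow_right₀ hz1 hdw) hx
        have h2 : Gs * x * (((nbr adj u \ ∅).card : ℝ)) * (1+Cs) ^ ((nbr adj u \ ∅).card - 1)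
            ≤ Gs * x * (D : ℝ) * (1+Cs) ^ (D - 1) := by
          apply mul_le_mul
          · apply mul_le_mul_of_nonneg_left _ (by positivity)
            exact_mod_cast hdw
          · exact pow_le_pow_right₀ hz1 (Nat.sub_le_sub_right hdw 1)
          · positivity
          · positivity
        linarith
    _ ≤ Gs := hB

/-- sum over a biUnion is at most the double sum, for nonnegative summands -/
lemma sum_biUnion_le_nonneg {β γ : Type*} [DecidableEq γ] (s : Finset β) (t : β → Finset γ)
    (f : γ → ℝ) (hf : ∀ c, 0 ≤ f c) :
    ∑ c ∈ s.biUnion t, f c ≤ ∑ b ∈ s, ∑ c ∈ t b, f c := by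
  classical
  induction s using Finset.induction with
  | empty => simp
  | @insert a s ha ih =>
      rw [biUnion_insert, sum_insert ha]
      have h1 : ∑ c ∈ t a ∪ s.biUnion t, f c ≤ ∑ c ∈ t a, f c + ∑ c ∈ s.biUnion t, f c := by
        have h2 := sum_union_inter (s₁ := t a) (s₂ := s.biUnion t) (f := f)
        have h3 : (0:ℝ) ≤ ∑ c ∈ t a ∩ s.biUnion t, f c := sum_nonneg fun c _ => hf c
        linarith
      linarith [ih]

end Counting3


section Apply

variable {V : Type*} [Fintype V]

/-- the relevant adjacency: distance ≤ 2 within the left part -/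
def adjL (G : SimpleGraph V) (VL : Finset V) : V → V → Prop :=
  fun a b => (graphSquare G).Adj a b ∧ a ∈ VL ∧ b ∈ VL

lemma adjL_symm (G : SimpleGraph V) (VL : Finset V) : Symmetric (adjL G VL) :=
  fun _ _ h => ⟨h.1.symm, h.2.2, h.2.1⟩

lemma adjL_irr (G : SimpleGraph V) (VL : Finset V) : ∀ a, ¬ adjL G VL a a :=
  fun a h => h.1.ne rfl

lemma mem_nbhd_singleton {G : SimpleGraph V} {u w : V} : w ∈ nbhd G {u} ↔ G.Adj u w := by
  simp [nbhd]

lemma adjL_deg (G : SimpleGraph V) (VL VR : Finset V) (hbip : IsBipartition G VL VR)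
    (Δ : ℕ) (hΔ : 1 ≤ Δ) (hdeg : ∀ v : V, (nbhd G {v}).card ≤ Δ) :
    ∀ u : V, (nbr (adjL G VL) u).card ≤ Δ * (Δ - 1) := by
  classical
  intro u
  have hsub : nbr (adjL G VL) u ⊆ (nbhd G {u}).biUnion (fun w => (nbhd G {w}).erase u) := by
    intro v hv
    obtain ⟨hadj, huVL, hvVL⟩ := (Finset.mem_filter.mp hv).2
    obtain ⟨hne, hcase⟩ : u ≠ v ∧ (G.Adj u v ∨ ∃ w, G.Adj u w ∧ G.Adj w v) := hadj
    have hmid : ∃ w, G.Adj u w ∧ G.Adj w v := by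
      rcases hcase with h | h
      · exfalso
        rcases hbip.2.2 u v h with ⟨-, hvVR⟩ | ⟨huVR, -⟩
        · exact (Finset.disjoint_left.mp hbip.1) hvVL hvVR
        · exact (Finset.disjoint_left.mp hbip.1) huVL huVR
      · exact h
    obtain ⟨w, h1, h2⟩ := hmid
    apply Finset.mem_biUnion.mpr
    refine ⟨w, mem_nbhd_singleton.mpr h1, ?_⟩
    exact Finset.mem_erase.mpr ⟨hne.symm, mem_nbhd_singleton.mpr h2⟩
  calc (nbr (adjL G VL) u).card
      ≤ ((nbhd G {u}).biUnion (fun w => (nbhd G {w}).erase u)).card := Finset.card_le_card hsub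
    _ ≤ ∑ w ∈ nbhd G {u}, ((nbhd G {w}).erase u).card := Finset.card_biUnion_le
    _ ≤ ∑ _w ∈ nbhd G {u}, (Δ - 1) := by
        apply Finset.sum_le_sum
        intro w hw
        have hadj : G.Adj u w := mem_nbhd_singleton.mp hw
        have hu : u ∈ nbhd G {w} := mem_nbhd_singleton.mpr hadj.symm
        rw [Finset.card_erase_of_mem hu]
        have := hdeg w
        omega
    _ = (nbhd G {u}).card * (Δ - 1) := by rw [Finset.sum_const, smul_eq_mul]
    _ ≤ Δ * (Δ - 1) := Nat.mul_le_mul_right _ (hdeg u)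

lemma polymer_conn (G : SimpleGraph V) (VL : Finset V) {S' : Finset V}
    (h : IsHCPolymer G VL S') : ConnOn (adjL G VL) S' := by
  intro a ha b hb
  have hconn := h.2.2.2
  have aux : ∀ (va vb : (↑S' : Set V)), ((graphSquare G).induce (↑S' : Set V)).Walk va vb →
      Reach (adjL G VL) S' va.1 vb.1 := by
    intro va vb p
    induction p with
    | nil => exact Relation.ReflTransGen.refl
    | @cons va vmid vb hadj p ih =>
        refine Relation.ReflTransGen.head ?_ ih
        have hva : (va : V) ∈ S' := by exact_mod_cast va.2
        have hvm : (vmid : V) ∈ S' := by exact_mod_cast vmid.2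
        have hGadj : (graphSquare G).Adj (va : V) (vmid : V) := hadj
        exact ⟨⟨hGadj, h.2.1 hva, h.2.1 hvm⟩, hva, hvm⟩
  obtain ⟨p⟩ := hconn.preconnected ⟨a, by exact_mod_cast ha⟩ ⟨b, by exact_mod_cast hb⟩
  exact aux _ _ p

lemma lam_ge_one {α : ℝ} (hα : α ∈ Set.Ioo (0:ℝ) 1) {Δ : ℕ} (hΔ : 1 ≤ Δ) {lam : ℝ}
    (hlam : (Real.exp 1 * (Δ : ℝ) ^ 2 / 0.8) ^ (α⁻¹) ≤ lam) : 1 ≤ lam := by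
  have hΔR : (1:ℝ) ≤ (Δ:ℝ) := by exact_mod_cast hΔ
  have hE := Real.exp_one_gt_d9
  have hM1 : (1:ℝ) ≤ Real.exp 1 * (Δ : ℝ) ^ 2 / 0.8 := by
    rw [le_div_iff₀ (by norm_num : (0:ℝ) < 0.8)]
    nlinarith
  have h0 : (Real.exp 1 * (Δ : ℝ) ^ 2 / 0.8) ^ (0:ℝ)
      ≤ (Real.exp 1 * (Δ : ℝ) ^ 2 / 0.8) ^ (α⁻¹) := by
    apply Real.rpow_le_rpow_of_exponent_le hM1
    have := hα.1
    positivity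
  rw [Real.rpow_zero] at h0
  exact h0.trans hlam

lemma weight_le (G : SimpleGraph V) (VL VR : Finset V) {α : ℝ} (hα : α ∈ Set.Ioo (0:ℝ) 1)
    (hexp : IsBipartiteExpander G VL VR α) {Δ : ℕ} (hΔ : 1 ≤ Δ) {lam : ℝ}
    (hlam : (Real.exp 1 * (Δ : ℝ) ^ 2 / 0.8) ^ (α⁻¹) ≤ lam)
    {S' : Finset V} (h : IsHCPolymer G VL S') :
    hcWeight G lam S' ≤ ((Real.exp 1 * (Δ : ℝ) ^ 2 / 0.8)⁻¹) ^ S'.card := by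
  have hΔR : (1:ℝ) ≤ (Δ:ℝ) := by exact_mod_cast hΔ
  have hE := Real.exp_one_gt_d9
  set M := Real.exp 1 * (Δ : ℝ) ^ 2 / 0.8 with hM
  have hMpos : 0 < M := by
    rw [hM]
    exact div_pos (mul_pos (Real.exp_pos 1) (by nlinarith)) (by norm_num)
  have hM1 : (1:ℝ) ≤ M := by
    rw [hM, le_div_iff₀ (by norm_num : (0:ℝ) < 0.8)]
    nlinarith
  have hαpos : 0 < α := hα.1
  have hlam1 : 1 ≤ lam := lam_ge_one hα hΔ hlam
  have hlampos : (0:ℝ) < lam := by linarith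
  have hMlam : M ≤ lam ^ α := by
    have h1 : (M ^ (α⁻¹)) ^ α ≤ lam ^ α :=
      Real.rpow_le_rpow (by positivity) hlam (le_of_lt hαpos)
    rwa [← Real.rpow_mul hMpos.le, inv_mul_cancel₀ (ne_of_gt hαpos), Real.rpow_one] at h1
  obtain ⟨hne, hsubL, hhalf, hconn⟩ := h
  have hexp' : (1+α) * (S'.card : ℝ) ≤ ((nbhd G S').card : ℝ) := hexp.2.1 S' hsubL hhalf
  set k := S'.card with hk
  set m := (nbhd G S').card with hm
  have hstep1 : hcWeight G lam S' ≤ lam ^ k / lam ^ m := by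
    rw [hcWeight]
    apply div_le_div_of_nonneg_left (by positivity) (by positivity)
    exact pow_le_pow_left₀ hlampos.le (by linarith) m
  have hstep2 : lam ^ k / lam ^ m = lam ^ ((k:ℝ) - (m:ℝ)) := by
    rw [Real.rpow_sub hlampos, Real.rpow_natCast, Real.rpow_natCast]
  have hstep3 : lam ^ ((k:ℝ) - (m:ℝ)) ≤ lam ^ (-(α * (k:ℝ))) := by
    apply Real.rpow_le_rpow_of_exponent_le hlam1
    nlinarith
  have hstep4 : lam ^ (-(α * (k:ℝ))) = ((lam ^ α) ^ k)⁻¹ := by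
    rw [Real.rpow_neg hlampos.le, Real.rpow_mul hlampos.le, Real.rpow_natCast]
  have hstep5 : ((lam ^ α) ^ k)⁻¹ ≤ (M ^ k)⁻¹ := by
    apply inv_anti₀ (pow_pos hMpos k)
    exact pow_le_pow_left₀ hMpos.le hMlam k
  calc hcWeight G lam S' ≤ lam ^ k / lam ^ m := hstep1
    _ = lam ^ ((k:ℝ) - (m:ℝ)) := hstep2
    _ ≤ lam ^ (-(α * (k:ℝ))) := hstep3
    _ = ((lam ^ α) ^ k)⁻¹ := hstep4
    _ ≤ (M ^ k)⁻¹ := hstep5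
    _ = (M⁻¹) ^ k := (inv_pow M k).symm

end Apply


section Numeric

lemma numeric1 (A E2 : ℝ) (hA : 1 ≤ A) (hE : (1.6:ℝ) ≤ E2) (hEpos : 0 < E2) :
    0.8/(E2*E2*A^2)*E2 ≤ 1/(2*A^2) := by
  have hA0 : (0:ℝ) < A := by linarith
  have hA2 : (0:ℝ) < A^2 := by positivity
  rw [div_mul_eq_mul_div, div_le_div_iff₀ (by positivity) (by positivity)]
  nlinarith [mul_nonneg (mul_nonneg hEpos.le hA2.le) (sub_nonneg.mpr hE)]

lemma numeric2 (A E2 : ℝ) (hA : 1 ≤ A) (hE : (1.6:ℝ) ≤ E2) (hEpos : 0 < E2) :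
    0.8/(E2*E2*A^2)*E2 + 1/(A^2 - A + 1)*(0.8/(E2*E2*A^2))*(A^2 - A)*E2
      ≤ 1/(A^2 - A + 1) := by
  have hA0 : (0:ℝ) < A := by linarith
  have hA2 : (0:ℝ) < A^2 := by positivity
  have hP : (0:ℝ) < A^2 - A + 1 := by nlinarith
  rw [← sub_nonneg]
  have heq : 1/(A^2 - A + 1)
        - (0.8/(E2*E2*A^2)*E2 + 1/(A^2 - A + 1)*(0.8/(E2*E2*A^2))*(A^2 - A)*E2)
      = (E2*E2*A^2 - 0.8*E2*((A^2 - A + 1) + (A^2 - A)))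
          / ((A^2 - A + 1)*(E2*E2*A^2)) := by
    generalize A^2 - A + 1 = Q at hP ⊢
    field_simp
  rw [heq]
  apply div_nonneg
  · nlinarith [mul_nonneg (mul_nonneg hEpos.le hA2.le) (sub_nonneg.mpr hE),
      mul_nonneg hEpos.le (by nlinarith : (0:ℝ) ≤ 2*A - 1)]
  · exact mul_nonneg hP.le (by positivity)

end Numeric

section Main

variable {V : Type*} [Fintype V]

lemma key_sum (G : SimpleGraph V)
    (VL VR : Finset V) (α : ℝ) (hα : α ∈ Set.Ioo (0 : ℝ) 1)
    (hexp : IsBipartiteExpander G VL VR α)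
    (Δ : ℕ) (hΔ : 1 ≤ Δ) (hdeg : ∀ v : V, (nbhd G {v}).card ≤ Δ)
    (lam : ℝ) (hlam : (Real.exp 1 * (Δ : ℝ) ^ 2 / 0.8) ^ (α⁻¹) ≤ lam)
    (S : Finset V) (hS : IsHCPolymer G VL S) :
    (∑ S' ∈ Finset.univ.filter fun S' => IsHCPolymer G VL S' ∧ HCIncomp G S S',
        (S'.card : ℝ) * hcWeight G lam S') ≤ (S.card : ℝ) := by
  classical
  letI : LinearOrder V := LinearOrder.lift' (Fintype.equivFin V) (Fintype.equivFin V).injective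
  set adj := adjL G VL with hadjdef
  have hsym := adjL_symm G VL
  have hirr := adjL_irr G VL
  set D := Δ * (Δ - 1) with hD
  have hdegH : ∀ u : V, (nbr adj u).card ≤ D := adjL_deg G VL VR hexp.1 Δ hΔ hdeg
  have hΔR : (1:ℝ) ≤ (Δ:ℝ) := by exact_mod_cast hΔ
  have hΔpos : (0:ℝ) < (Δ:ℝ) := by linarith
  set E2 := Real.exp ((1:ℝ)/2) with hE2
  have hE2pos : (0:ℝ) < E2 := Real.exp_pos _
  have hEE : E2 * E2 = Real.exp 1 := by rw [hE2, ← Real.exp_add]; norm_num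
  have hE := Real.exp_one_gt_d9
  have hE16 : (1.6:ℝ) ≤ E2 := by nlinarith
  set x := (Real.exp 1 * (Δ:ℝ)^2 / 0.8)⁻¹ with hx
  have hxval : x = 0.8 / (Real.exp 1 * (Δ:ℝ)^2) := by rw [hx, inv_div]
  have hΔ2pos : (0:ℝ) < (Δ:ℝ)^2 := by positivity
  have hxpos : (0:ℝ) < x := by
    rw [hxval]
    apply div_pos (by norm_num) (mul_pos (Real.exp_pos 1) hΔ2pos)
  set Cs := 1 / (2*(Δ:ℝ)^2) with hCs
  have hCs0 : (0:ℝ) ≤ Cs := by rw [hCs]; positivity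
  set P := (Δ:ℝ)^2 - (Δ:ℝ) + 1 with hP
  have hPpos : (0:ℝ) < P := by rw [hP]; nlinarith
  set Gs := 1 / P with hGs
  have hGs0 : (0:ℝ) ≤ Gs := by rw [hGs]; positivity
  have hDcast : ((D:ℕ):ℝ) = (Δ:ℝ)^2 - (Δ:ℝ) := by
    rw [hD, Nat.cast_mul, Nat.cast_sub hΔ, Nat.cast_one]; ring
  -- (1+Cs)^D ≤ exp(1/2)
  have hzD : (1+Cs)^D ≤ E2 := by
    calc (1+Cs)^D ≤ (Real.exp Cs)^D := by
          apply pow_le_pow_left₀ (by positivity)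
          linarith [Real.add_one_le_exp Cs]
      _ = Real.exp ((D:ℝ) * Cs) := (Real.exp_nat_mul Cs D).symm
      _ ≤ E2 := by
          rw [hE2]
          apply Real.exp_le_exp.mpr
          rw [hDcast, hCs, mul_one_div, div_le_div_iff₀ (by positivity) (by norm_num)]
          nlinarith
  have hA : x * (1+Cs)^D ≤ Cs := by
    calc x * (1+Cs)^D ≤ x * E2 := mul_le_mul_of_nonneg_left hzD hxpos.le
      _ = 0.8/(E2*E2*(Δ:ℝ)^2)*E2 := by rw [hxval, ← hEE]
      _ ≤ 1/(2*(Δ:ℝ)^2) := numeric1 (Δ:ℝ) E2 hΔR hE16 hE2pos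
      _ = Cs := by rw [hCs]
  have hBB : x * (1+Cs)^D + Gs * x * (D:ℝ) * (1+Cs)^(D-1) ≤ Gs := by
    have hz1 : (1:ℝ) ≤ 1 + Cs := by linarith
    have h2 : x * (1+Cs)^D ≤ x * E2 := mul_le_mul_of_nonneg_left hzD hxpos.le
    have t2 : Gs * x * (D:ℝ) * (1+Cs)^(D-1) ≤ Gs * x * (D:ℝ) * E2 := by
      apply mul_le_mul_of_nonneg_left _ (by positivity)
      exact (pow_le_pow_right₀ hz1 (Nat.sub_le D 1)).trans hzD
    have hs : x * E2 + Gs * x * (D:ℝ) * E2 ≤ Gs := by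
      have form : x * E2 + Gs * x * (D:ℝ) * E2
          = 0.8/(E2*E2*(Δ:ℝ)^2)*E2
            + 1/((Δ:ℝ)^2 - (Δ:ℝ) + 1)*(0.8/(E2*E2*(Δ:ℝ)^2))*((Δ:ℝ)^2 - (Δ:ℝ))*E2 := by
        rw [hxval, hGs, hDcast, ← hEE, hP]
      have := numeric2 (Δ:ℝ) E2 hΔR hE16 hE2pos
      rw [form, hGs, hP]
      exact this
    linarith
  set n := Fintype.card V with hn
  have corB : ∀ u : V, (∑ A ∈ CSr adj u ∅ n, (A.card:ℝ) * x^A.card) ≤ Gs :=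
    fun u => keyB_final adj x Cs Gs D hsym hirr hxpos.le hCs0 hGs0 hdegH hA hBB n u
  set F := (Finset.univ : Finset (Finset V)).filter
    (fun S' => IsHCPolymer G VL S' ∧ HCIncomp G S S') with hF
  have hweight : ∀ S' ∈ F, (S'.card:ℝ) * hcWeight G lam S' ≤ (S'.card:ℝ) * x ^ S'.card := by
    intro S' hS'
    have hpoly := ((Finset.mem_filter.mp hS').2).1
    apply mul_le_mul_of_nonneg_left _ (Nat.cast_nonneg _)
    rw [hx]
    exact weight_le G VL VR hα hexp hΔ hlam hpoly
  set U := S.biUnion (fun v => (insert v (nbr adj v)).biUnion (fun u => CSr adj u ∅ n)) with hU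
  have hFU : F ⊆ U := by
    intro S' hS'
    obtain ⟨hpoly, a, haS, b, hbS', hab⟩ := (Finset.mem_filter.mp hS').2
    apply Finset.mem_biUnion.mpr
    refine ⟨a, haS, ?_⟩
    apply Finset.mem_biUnion.mpr
    have hbanch : b ∈ insert a (nbr adj a) := by
      rcases hab with rfl | hadj
      · exact Finset.mem_insert_self _ _
      · apply Finset.mem_insert_of_mem
        apply Finset.mem_filter.mpr
        exact ⟨Finset.mem_univ _, hadj, hS.2.1 haS, hpoly.2.1 hbS'⟩
    refine ⟨b, hbanch, ?_⟩
    rw [mem_CSr]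
    refine ⟨hbS', ?_, polymer_conn G VL hpoly, by simp⟩
    rw [hn]
    simpa using Finset.card_le_univ S'
  have hanchcard : ∀ v : V, ((insert v (nbr adj v)).card : ℝ) ≤ 1 + (D:ℝ) := by
    intro v
    have h1 : (insert v (nbr adj v)).card ≤ (nbr adj v).card + 1 := Finset.card_insert_le _ _
    have h2 := hdegH v
    have h3 : (insert v (nbr adj v)).card ≤ 1 + D := by omega
    exact_mod_cast h3
  have hGsD : (1 + (D:ℝ)) * Gs = 1 := by
    rw [hDcast, hGs, hP]
    rw [mul_one_div, div_eq_one_iff_eq (by nlinarith)]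
    ring
  calc (∑ S' ∈ F, (S'.card : ℝ) * hcWeight G lam S')
      ≤ ∑ S' ∈ F, (S'.card : ℝ) * x ^ S'.card := Finset.sum_le_sum hweight
    _ ≤ ∑ S' ∈ U, (S'.card : ℝ) * x ^ S'.card := by
        apply Finset.sum_le_sum_of_subset_of_nonneg hFU
        intro S' _ _
        have := hxpos.le
        positivity
    _ ≤ ∑ v ∈ S, ∑ S' ∈ (insert v (nbr adj v)).biUnion (fun u => CSr adj u ∅ n),
          (S'.card : ℝ) * x ^ S'.card := by
        rw [hU]
        apply sum_biUnion_le_nonneg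
        intro c
        have := hxpos.le
        positivity
    _ ≤ ∑ v ∈ S, ∑ u ∈ insert v (nbr adj v), ∑ S' ∈ CSr adj u ∅ n,
          (S'.card : ℝ) * x ^ S'.card := by
        apply Finset.sum_le_sum
        intro v _
        apply sum_biUnion_le_nonneg
        intro c
        have := hxpos.le
        positivity
    _ ≤ ∑ v ∈ S, ∑ _u ∈ insert v (nbr adj v), Gs := by
        apply Finset.sum_le_sum; intro v _
        apply Finset.sum_le_sum; intro u _
        exact corB u
    _ ≤ ∑ _v ∈ S, (1:ℝ) := by
        apply Finset.sum_le_sum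
        intro v _
        rw [Finset.sum_const, nsmul_eq_mul]
        calc ((insert v (nbr adj v)).card : ℝ) * Gs ≤ (1 + (D:ℝ)) * Gs :=
              mul_le_mul_of_nonneg_right (hanchcard v) hGs0
          _ = 1 := hGsD
    _ = (S.card : ℝ) := by rw [Finset.sum_const, nsmul_eq_mul, mul_one]

end Main

/-- For the left hard-core polymer model on a bipartite `α`-expander
of maximum degree at most `Δ` with `λ ≥ (eΔ²/0.8)^{1/α}`, for every polymer `S` the sum
of `|S'|·w_{S'}` over all polymers `S'` incompatible with `S` (including `S` itself) is
at most `|S|`; consequently the model satisfies the clique dynamics condition with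
`f(S) = |S|`. -/
theorem hardcore_clique_dynamics_condition {V : Type*} [Fintype V] (G : SimpleGraph V)
    (VL VR : Finset V) (α : ℝ) (hα : α ∈ Set.Ioo (0 : ℝ) 1)
    (hexp : IsBipartiteExpander G VL VR α)
    (Δ : ℕ) (hΔ : 1 ≤ Δ) (hdeg : ∀ v : V, (nbhd G {v}).card ≤ Δ)
    (lam : ℝ) (hlam : (Real.exp 1 * (Δ : ℝ) ^ 2 / 0.8) ^ (α⁻¹) ≤ lam)
    (S : Finset V) (hS : IsHCPolymer G VL S) :
    (∑ S' ∈ Finset.univ.filter fun S' => IsHCPolymer G VL S' ∧ HCIncomp G S S',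
        (S'.card : ℝ) * hcWeight G lam S') ≤ (S.card : ℝ) ∧
    ∀ S₀ : Finset V, IsHCPolymer G VL S₀ →
      (∑ S' ∈ Finset.univ.filter fun S' =>
            IsHCPolymer G VL S' ∧ HCIncomp G S₀ S' ∧ S' ≠ S₀,
          (S'.card : ℝ) * hcWeight G lam S' / (1 + hcWeight G lam S'))
        ≤ (S₀.card : ℝ) := by
  have hlam1 : (1:ℝ) ≤ lam := lam_ge_one hα hΔ hlam
  have hw0 : ∀ T : Finset V, 0 ≤ hcWeight G lam T := by
    intro T
    apply div_nonneg (pow_nonneg (by linarith) _) (pow_nonneg (by linarith) _)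
  constructor
  · exact key_sum G VL VR α hα hexp Δ hΔ hdeg lam hlam S hS
  · intro S₀ hS₀
    have hmain := key_sum G VL VR α hα hexp Δ hΔ hdeg lam hlam S₀ hS₀
    calc (∑ S' ∈ Finset.univ.filter fun S' =>
            IsHCPolymer G VL S' ∧ HCIncomp G S₀ S' ∧ S' ≠ S₀,
          (S'.card : ℝ) * hcWeight G lam S' / (1 + hcWeight G lam S'))
        ≤ ∑ S' ∈ Finset.univ.filter fun S' =>
            IsHCPolymer G VL S' ∧ HCIncomp G S₀ S' ∧ S' ≠ S₀,
          (S'.card : ℝ) * hcWeight G lam S' := by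
          apply Finset.sum_le_sum
          intro T _
          apply div_le_self (mul_nonneg (Nat.cast_nonneg _) (hw0 T)) (by linarith [hw0 T])
      _ ≤ ∑ S' ∈ Finset.univ.filter fun S' => IsHCPolymer G VL S' ∧ HCIncomp G S₀ S',
            (S'.card : ℝ) * hcWeight G lam S' := by
          apply Finset.sum_le_sum_of_subset_of_nonneg
          · intro A hA
            have h := Finset.mem_filter.mp hA
            exact Finset.mem_filter.mpr ⟨h.1, h.2.1, h.2.2.1⟩
          · intro T _ _
            exact mul_nonneg (Nat.cast_nonneg _) (hw0 T)
      _ ≤ (S₀.card : ℝ) := hmain
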